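/- For every n ≥ 1, the homological dimension of the complete graph K_n equals n − 2. -/

import Mathlib

open Finset

/-- Z/2 boundary of a chain represented as a set of simplices. -/
def bdry {V : Type} [DecidableEq V] (c : Finset (Finset V)) : Finset (Finset V) :=
  (c.sup Finset.powerset).filter fun τ =>
    Odd ((c.filter fun σ => τ ⊆ σ ∧ τ.card + 1 = σ.card).card)

def IsChainOf {V : Type} [DecidableEq V] (K : Finset (Finset V)) (d : ℕ)
    (c : Finset (Finset V)) : Prop :=
  ∀ σ ∈ c, σ ∈ K ∧ σ.card = d + 1

/-- Reduced simplicial Z/2-homology of the complex `K` is nonzero in dimension `d`. -/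
def RedHomNonzero {V : Type} [DecidableEq V] (K : Finset (Finset V)) (d : ℕ) : Prop :=
  ∃ c : Finset (Finset V), IsChainOf K d c ∧ bdry c = ∅ ∧
    ∀ b : Finset (Finset V), IsChainOf K (d + 1) b → bdry b ≠ c

/-- The nerve of a finite family of nonempty finite sets. -/
def nerveF {V ι : Type} [DecidableEq V] [Fintype V] [Fintype ι] [DecidableEq ι]
    (F : ι → Finset V) : Finset (Finset ι) :=
  Finset.univ.filter fun σ : Finset ι => σ.Nonempty ∧ (σ.inf F).Nonempty

/-- `F` is a connected cover in `G`: a family of (vertex sets of) induced subgraphs,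
all of whose nonempty intersections induce connected subgraphs. -/
def IsConnCover {V ι : Type} [DecidableEq V] [Fintype V] [Fintype ι] [DecidableEq ι]
    (G : SimpleGraph V) (F : ι → Finset V) : Prop :=
  (∀ i, (F i).Nonempty) ∧
  ∀ σ : Finset ι, σ.Nonempty → (σ.inf F).Nonempty →
    (G.induce ((σ.inf F : Finset V) : Set V)).Connected

/-- The homological dimension of `G` is at least `d`. -/
def GammaGe {V : Type} [DecidableEq V] [Fintype V] (G : SimpleGraph V) (d : ℕ) : Prop :=
  ∃ (n : ℕ) (F : Fin n → Finset V), IsConnCover G F ∧ RedHomNonzero (nerveF F) d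

/-- The homological dimension of `G` equals the integer `m`:
`m` is the greatest `d` with `GammaGe G d` (and `m = -1` when there is none). -/
def HomDimEq {V : Type} [DecidableEq V] [Fintype V] (G : SimpleGraph V) (m : ℤ) : Prop :=
  (∀ d : ℕ, m < (d : ℤ) → ¬ GammaGe G d) ∧ (∀ d : ℕ, (d : ℤ) = m → GammaGe G d)

/-- `H` is a minor of `G`. -/
def IsMinor {W V : Type} [Fintype W] [DecidableEq W] [Fintype V] [DecidableEq V]
    (H : SimpleGraph W) (G : SimpleGraph V) : Prop :=
  ∃ B : W → Finset V,
    (∀ w, (B w).Nonempty) ∧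
    (∀ u w, u ≠ w → Disjoint (B u) (B w)) ∧
    (∀ w, (G.induce ((B w : Finset V) : Set V)).Connected) ∧
    (∀ u w, H.Adj u w → ∃ a ∈ B u, ∃ b ∈ B w, G.Adj a b)




open scoped symmDiff

lemma mem_bdry {V : Type} [DecidableEq V] {c : Finset (Finset V)} {τ : Finset V} :
    τ ∈ bdry c ↔ Odd ((c.filter fun σ => τ ⊆ σ ∧ τ.card + 1 = σ.card).card) := by
  simp only [bdry, Finset.mem_filter, and_iff_right_iff_imp]
  intro h
  have hpos : 0 < (c.filter fun σ => τ ⊆ σ ∧ τ.card + 1 = σ.card).card := by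
    rcases h with ⟨k, hk⟩; omega
  obtain ⟨σ, hσ⟩ := Finset.card_pos.mp hpos
  simp only [Finset.mem_filter] at hσ
  exact Finset.mem_sup.mpr ⟨σ, hσ.1, Finset.mem_powerset.mpr hσ.2.1⟩

@[simp] lemma bdry_empty {V : Type} [DecidableEq V] : bdry (∅ : Finset (Finset V)) = ∅ := by
  simp [bdry]

lemma card_symmDiff_parity {α : Type*} [DecidableEq α] (s t : Finset α) :
    (s ∆ t).card + 2 * (s ∩ t).card = s.card + t.card := by
  have h1 : s ∆ t = (s \ t) ∪ (t \ s) := rfl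
  have hd : Disjoint (s \ t) (t \ s) := disjoint_sdiff_sdiff
  have h2 := Finset.card_sdiff_add_card_inter s t
  have h3 := Finset.card_sdiff_add_card_inter t s
  have hc : (s ∆ t).card = (s \ t).card + (t \ s).card := by
    rw [h1, Finset.card_union_of_disjoint hd]
  rw [Finset.inter_comm t s] at h3
  omega

lemma filter_symmDiff' {α : Type*} [DecidableEq α] (s t : Finset α) (p : α → Prop)
    [DecidablePred p] : (s ∆ t).filter p = (s.filter p) ∆ (t.filter p) := by
  ext a; simp only [Finset.mem_filter, Finset.mem_symmDiff]; tauto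

lemma bdry_symmDiff {V : Type} [DecidableEq V] (a b : Finset (Finset V)) :
    bdry (a ∆ b) = bdry a ∆ bdry b := by
  ext τ
  simp only [Finset.mem_symmDiff, mem_bdry, filter_symmDiff']
  set x := (a.filter fun σ => τ ⊆ σ ∧ τ.card + 1 = σ.card)
  set y := (b.filter fun σ => τ ⊆ σ ∧ τ.card + 1 = σ.card)
  have := card_symmDiff_parity x y
  rcases Nat.even_or_odd x.card with hx | hx <;> rcases Nat.even_or_odd y.card with hy | hy <;>
    simp only [Nat.odd_iff, Nat.even_iff] at * <;> omega

lemma bdry_cone {V : Type} [DecidableEq V] (x : V) (D : ℕ) (hD : 1 ≤ D)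
    (c : Finset (Finset V)) (hpure : ∀ σ ∈ c, σ.card = D) (hcyc : bdry c = ∅) :
    bdry ((c.filter fun σ => x ∉ σ).image (insert x ·)) = c := by
  ext τ
  rw [mem_bdry, Finset.filter_image]
  rw [Finset.card_image_of_injOn]
  swap
  · intro σ₁ h₁ σ₂ h₂ he
    simp only [Finset.coe_filter, Set.mem_setOf_eq, Finset.mem_filter] at h₁ h₂
    have := congrArg (fun s => Finset.erase s x) he
    simpa [Finset.erase_insert h₁.1.2, Finset.erase_insert h₂.1.2] using this
  have hA : ((c.filter fun σ => x ∉ σ).filter fun σ =>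
        τ ⊆ insert x σ ∧ τ.card + 1 = (insert x σ).card)
      = c.filter (fun σ => x ∉ σ ∧ τ ⊆ insert x σ ∧ τ.card + 1 = σ.card + 1) := by
    ext σ
    simp only [Finset.mem_filter, and_assoc]
    constructor
    · rintro ⟨h1, h2, h3, h4⟩
      rw [Finset.card_insert_of_notMem h2] at h4
      exact ⟨h1, h2, h3, h4⟩
    · rintro ⟨h1, h2, h3, h4⟩
      rw [Finset.card_insert_of_notMem h2]
      exact ⟨h1, h2, h3, h4⟩
  rw [hA]
  by_cases hcard : τ.card = D
  · by_cases hx : x ∈ τ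
    · -- case x ∈ τ
      set τ' := τ.erase x with hτ'
      have hτc : τ'.card + 1 = D := by
        rw [hτ', Finset.card_erase_of_mem hx]; omega
      have hiter : τ = insert x τ' := by rw [hτ', Finset.insert_erase hx]
      have hAeq : c.filter (fun σ => x ∉ σ ∧ τ ⊆ insert x σ ∧ τ.card + 1 = σ.card + 1)
          = c.filter (fun σ => x ∉ σ ∧ τ' ⊆ σ) := by
        apply Finset.filter_congr
        intro σ hσ
        have hσc := hpure σ hσ
        constructor
        · rintro ⟨h1, h2, _⟩
          refine ⟨h1, fun y hy => ?_⟩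
          have hyx : y ≠ x := Finset.ne_of_mem_erase (by simpa [hτ'] using hy)
          have : y ∈ insert x σ := h2 (Finset.erase_subset x τ hy)
          rcases Finset.mem_insert.mp this with h | h
          · exact absurd h hyx
          · exact h
        · rintro ⟨h1, h2⟩
          refine ⟨h1, ?_, by omega⟩
          rw [hiter]
          exact Finset.insert_subset_insert x h2
      rw [hAeq]
      -- relate to the cycle condition at τ'
      have hcyc' : ¬ Odd ((c.filter fun σ => τ' ⊆ σ ∧ τ'.card + 1 = σ.card).card) := by
        rw [← mem_bdry, hcyc]; exact Finset.notMem_empty _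
      have hB : (c.filter fun σ => τ' ⊆ σ ∧ τ'.card + 1 = σ.card)
          = c.filter (fun σ => x ∉ σ ∧ τ' ⊆ σ) ∪ c.filter (fun σ => x ∈ σ ∧ τ' ⊆ σ) := by
        rw [← Finset.filter_or]
        apply Finset.filter_congr
        intro σ hσ
        have hσc := hpure σ hσ
        constructor
        · rintro ⟨h1, _⟩; by_cases h : x ∈ σ
          · exact Or.inr ⟨h, h1⟩
          · exact Or.inl ⟨h, h1⟩
        · rintro (⟨_, h1⟩ | ⟨_, h1⟩) <;> exact ⟨h1, by omega⟩
      have hdisj : Disjoint (c.filter (fun σ => x ∉ σ ∧ τ' ⊆ σ))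
          (c.filter (fun σ => x ∈ σ ∧ τ' ⊆ σ)) := by
        apply Finset.disjoint_filter_filter'
        rw [disjoint_iff_inf_le]
        rintro σ ⟨h1, h2⟩
        exact absurd h2.1 h1.1
      have hBx : c.filter (fun σ => x ∈ σ ∧ τ' ⊆ σ) = c.filter (fun σ => σ = τ) := by
        apply Finset.filter_congr
        intro σ hσ
        have hσc := hpure σ hσ
        constructor
        · rintro ⟨h1, h2⟩
          have hsub : τ ⊆ σ := by rw [hiter]; exact Finset.insert_subset h1 h2
          exact (Finset.eq_of_subset_of_card_le hsub (by omega)).symm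
        · intro h
          rw [h]
          exact ⟨hx, Finset.erase_subset x τ⟩
      have hcards := Finset.card_union_of_disjoint hdisj
      rw [hB, hcards, hBx, Finset.filter_eq'] at hcyc'
      by_cases hτc' : τ ∈ c
      · simp only [hτc', if_true, Finset.card_singleton] at hcyc'
        simp only [hτc', iff_true]
        rw [Nat.odd_iff] at *
        omega
      · simp only [hτc', if_false, Finset.card_empty] at hcyc'
        simp only [hτc', iff_false]
        rw [Nat.odd_iff] at *
        omega
    · -- case x ∉ τ
      have hAeq : c.filter (fun σ => x ∉ σ ∧ τ ⊆ insert x σ ∧ τ.card + 1 = σ.card + 1)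
          = c.filter (fun σ => x ∉ σ ∧ σ = τ) := by
        apply Finset.filter_congr
        intro σ hσ
        have hσc := hpure σ hσ
        constructor
        · rintro ⟨h1, h2, h3⟩
          have hsub : τ ⊆ σ := by
            intro y hy
            rcases Finset.mem_insert.mp (h2 hy) with h | h
            · subst h; exact absurd hy hx
            · exact h
          exact ⟨h1, (Finset.eq_of_subset_of_card_le hsub (by omega)).symm⟩
        · rintro ⟨h1, rfl⟩
          exact ⟨h1, (Finset.subset_insert x σ), by omega⟩
      rw [hAeq]
      by_cases hτc' : τ ∈ c
      · have : c.filter (fun σ => x ∉ σ ∧ σ = τ) = {τ} := by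
          ext σ
          simp only [Finset.mem_filter, Finset.mem_singleton]
          constructor
          · rintro ⟨_, _, rfl⟩; rfl
          · rintro rfl; exact ⟨hτc', hx, rfl⟩
        rw [this]
        simpa using hτc'
      · have : c.filter (fun σ => x ∉ σ ∧ σ = τ) = ∅ := by
          ext σ
          simp only [Finset.mem_filter, Finset.notMem_empty, iff_false]
          rintro ⟨h1, _, rfl⟩
          exact hτc' h1
        rw [this]
        simp [hτc']
  · -- τ.card ≠ D : both sides false
    have : c.filter (fun σ => x ∉ σ ∧ τ ⊆ insert x σ ∧ τ.card + 1 = σ.card + 1) = ∅ := by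
      ext σ
      simp only [Finset.mem_filter, Finset.notMem_empty, iff_false]
      rintro ⟨h1, _, _, h3⟩
      exact hcard (by have := hpure σ h1; omega)
    rw [this]
    simp only [Finset.card_empty]
    constructor
    · intro h; exact absurd h (by decide)
    · intro h; exact absurd (hpure τ h) hcard

lemma bdry_bdry {V : Type} [DecidableEq V] (c : Finset (Finset V)) : bdry (bdry c) = ∅ := by
  set U := c.sup Finset.powerset with hU
  have hzU : bdry c = U.filter
      (fun σ' => Odd ((c.filter fun σ => σ' ⊆ σ ∧ σ'.card + 1 = σ.card).card)) := rfl
  apply Finset.eq_empty_of_forall_notMem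
  intro τ hτ
  rw [mem_bdry] at hτ
  set Q : Finset V → Prop := fun σ' => τ ⊆ σ' ∧ τ.card + 1 = σ'.card with hQ
  have key : (((bdry c).filter Q).card : ZMod 2) = 0 := by
    have h1 : ((bdry c).filter Q) = (U.filter Q).filter
        (fun σ' => Odd ((c.filter fun σ => σ' ⊆ σ ∧ σ'.card + 1 = σ.card).card)) := by
      rw [hzU, Finset.filter_comm]
    have h2 : (((bdry c).filter Q).card : ZMod 2)
        = ∑ σ' ∈ U.filter Q,
            (((c.filter fun σ => σ' ⊆ σ ∧ σ'.card + 1 = σ.card).card : ZMod 2)) := by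
      rw [h1, Finset.card_filter]
      push_cast
      apply Finset.sum_congr rfl
      intro σ' _
      rcases Nat.even_or_odd ((c.filter fun σ => σ' ⊆ σ ∧ σ'.card + 1 = σ.card).card) with h | h
      · rw [if_neg (by simpa using h), (ZMod.natCast_eq_zero_iff_even).mpr h]
      · rw [if_pos h, (ZMod.natCast_eq_one_iff_odd).mpr h]
    rw [h2]
    have h3 : ∀ σ' ∈ U.filter Q,
        (((c.filter fun σ => σ' ⊆ σ ∧ σ'.card + 1 = σ.card).card : ZMod 2))
        = ∑ σ ∈ c, if σ' ⊆ σ ∧ σ'.card + 1 = σ.card then (1 : ZMod 2) else 0 := by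
      intro σ' _
      rw [Finset.card_filter]
      push_cast
      rfl
    rw [Finset.sum_congr rfl h3, Finset.sum_comm]
    apply Finset.sum_eq_zero
    intro σ hσ
    have : (∑ σ' ∈ U.filter Q, if σ' ⊆ σ ∧ σ'.card + 1 = σ.card then (1 : ZMod 2) else 0)
        = (((U.filter Q).filter fun σ' => σ' ⊆ σ ∧ σ'.card + 1 = σ.card).card : ZMod 2) := by
      rw [Finset.card_filter]; push_cast; rfl
    rw [this, ZMod.natCast_eq_zero_iff_even]
    -- show the set of σ' with τ ⊆ σ' ⊆ σ, |σ'| = |τ|+1, |σ'|+1 = |σ| has even card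
    by_cases hcase : τ ⊆ σ ∧ τ.card + 2 = σ.card
    · have himg : ((U.filter Q).filter fun σ' => σ' ⊆ σ ∧ σ'.card + 1 = σ.card)
          = (σ \ τ).image (fun y => insert y τ) := by
        ext σ'
        simp only [Finset.mem_filter, Finset.mem_image, Finset.mem_sdiff, hQ]
        constructor
        · rintro ⟨⟨_, h1, h2⟩, h3, h4⟩
          have hlt : τ.card < σ'.card := by omega
          obtain ⟨y, hy⟩ := Finset.exists_of_ssubset (Finset.ssubset_iff_subset_ne.mpr
            ⟨h1, fun h => by rw [h] at hlt; omega⟩)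
          refine ⟨y, ⟨h3 hy.1, hy.2⟩, ?_⟩
          apply Finset.eq_of_subset_of_card_le (Finset.insert_subset hy.1 h1)
          rw [Finset.card_insert_of_notMem hy.2]; omega
        · rintro ⟨y, ⟨hyσ, hyτ⟩, rfl⟩
          have hcard : (insert y τ).card = τ.card + 1 := Finset.card_insert_of_notMem hyτ
          refine ⟨⟨?_, Finset.subset_insert y τ, hcard.symm⟩,
            Finset.insert_subset hyσ hcase.1, by omega⟩
          exact Finset.mem_sup.mpr ⟨σ, hσ, Finset.mem_powerset.mpr
            (Finset.insert_subset hyσ hcase.1)⟩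
      rw [himg, Finset.card_image_of_injOn]
      · rw [Finset.card_sdiff_of_subset hcase.1]
        have : σ.card - τ.card = 2 := by omega
        rw [this]; decide
      · intro y₁ h₁ y₂ h₂ he
        simp only [Finset.coe_sdiff, Set.mem_diff, Finset.mem_coe] at h₁ h₂
        simp only [] at he
        have : y₁ ∈ insert y₂ τ := by rw [← he]; exact Finset.mem_insert_self y₁ τ
        rcases Finset.mem_insert.mp this with h | h
        · exact h
        · exact absurd h h₁.2
    · have : ((U.filter Q).filter fun σ' => σ' ⊆ σ ∧ σ'.card + 1 = σ.card) = ∅ := by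
        apply Finset.eq_empty_of_forall_notMem
        rintro σ' hσ'
        simp only [Finset.mem_filter, hQ] at hσ'
        obtain ⟨⟨_, h1, h2⟩, h3, h4⟩ := hσ'
        exact hcase ⟨h1.trans h3, by omega⟩
      rw [this]; simp
  rw [ZMod.natCast_eq_zero_iff_even] at key
  rw [Nat.odd_iff] at hτ
  rw [Nat.even_iff] at key
  simp only [hQ] at key
  omega

lemma mem_bdry_exists {V : Type} [DecidableEq V] {c : Finset (Finset V)} {τ : Finset V}
    (h : τ ∈ bdry c) : ∃ σ ∈ c, τ ⊆ σ ∧ τ.card + 1 = σ.card := by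
  rw [mem_bdry] at h
  have hpos : 0 < (c.filter fun σ => τ ⊆ σ ∧ τ.card + 1 = σ.card).card := by
    rcases h with ⟨k, hk⟩; omega
  obtain ⟨σ, hσ⟩ := Finset.card_pos.mp hpos
  simp only [Finset.mem_filter] at hσ
  exact ⟨σ, hσ.1, hσ.2⟩

lemma simplex_fill {ι : Type} [DecidableEq ι] (T : Finset ι) (D : ℕ) (hD : 1 ≤ D)
    (e : Finset (Finset ι)) (he : ∀ σ ∈ e, σ.card = D ∧ σ ⊆ T) (hcyc : bdry e = ∅) :
    ∃ u, (∀ ρ ∈ u, ρ.card = D + 1 ∧ ρ ⊆ T) ∧ bdry u = e := by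
  rcases e.eq_empty_or_nonempty with rfl | ⟨σ0, hσ0⟩
  · exact ⟨∅, fun ρ hρ => absurd hρ (Finset.notMem_empty ρ), bdry_empty⟩
  · obtain ⟨hc0, hs0⟩ := he σ0 hσ0
    obtain ⟨x, hx⟩ := Finset.card_pos.mp (by omega : 0 < σ0.card)
    refine ⟨(e.filter fun σ => x ∉ σ).image (insert x ·), ?_,
      bdry_cone x D hD e (fun σ h => (he σ h).1) hcyc⟩
    intro ρ hρ
    simp only [Finset.mem_image, Finset.mem_filter] at hρ
    obtain ⟨σ, ⟨hσe, hxσ⟩, rfl⟩ := hρ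
    obtain ⟨h1, h2⟩ := he σ hσe
    exact ⟨by rw [Finset.card_insert_of_notMem hxσ, h1], Finset.insert_subset (hs0 hx) h2⟩

lemma vanish {ι : Type} [DecidableEq ι] :
    ∀ (n : ℕ) (S : Fin n → Finset ι) (D : ℕ), n ≤ D →
    ∀ c : Finset (Finset ι),
      (∀ σ ∈ c, σ.card = D ∧ ∃ v, σ ⊆ S v) → bdry c = ∅ →
      ∃ b, (∀ ρ ∈ b, ρ.card = D + 1 ∧ ∃ v, ρ ⊆ S v) ∧ bdry b = c := by
  intro n
  induction n with
  | zero =>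
    intro S D _ c hc _
    have hce : c = ∅ := Finset.eq_empty_of_forall_notMem fun σ hσ =>
      (hc σ hσ).2.elim fun v _ => v.elim0
    subst hce
    exact ⟨∅, fun ρ hρ => absurd hρ (Finset.notMem_empty ρ), bdry_empty⟩
  | succ n IH =>
    intro S D hnD c hc hcyc
    have hD1 : 1 ≤ D := le_trans (Nat.succ_le_succ (Nat.zero_le n)) hnD
    set a := c.filter (fun σ => σ ⊆ S (Fin.last n)) with ha
    set c' := c.filter (fun σ => ¬ σ ⊆ S (Fin.last n)) with hc'def
    have hdisj : Disjoint a c' := Finset.disjoint_filter_filter_not c c _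
    have hsplit : a ∆ c' = c := by
      rw [hdisj.symmDiff_eq_sup]
      exact Finset.filter_union_filter_not_eq _ c
    have hzz : bdry a = bdry c' := by
      have h := bdry_symmDiff a c'
      rw [hsplit, hcyc] at h
      exact Finset.symmDiff_eq_empty.mp h.symm
    have hzprop : ∀ τ ∈ bdry a, τ.card = D - 1 ∧
        ∃ v : Fin n, τ ⊆ S v.castSucc ∩ S (Fin.last n) := by
      intro τ hτ
      obtain ⟨σa, hσa, hτa, hca⟩ := mem_bdry_exists hτ
      obtain ⟨σb, hσb, hτb, hcb⟩ := mem_bdry_exists (hzz ▸ hτ)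
      rw [ha, Finset.mem_filter] at hσa
      rw [hc'def, Finset.mem_filter] at hσb
      have hta : τ ⊆ S (Fin.last n) := hτa.trans hσa.2
      obtain ⟨v, hv⟩ := (hc σb hσb.1).2
      have hvlast : v ≠ Fin.last n := fun h => hσb.2 (h ▸ hv)
      obtain ⟨v', hv'⟩ := Fin.exists_castSucc_eq.mpr hvlast
      have hca' := (hc σa hσa.1).1
      refine ⟨by omega, v', ?_⟩
      exact Finset.subset_inter (hτb.trans (hv' ▸ hv)) hta
    obtain ⟨w, hw, hwz⟩ := IH (fun v => S v.castSucc ∩ S (Fin.last n)) (D - 1)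
      (by omega) (bdry a) hzprop (bdry_bdry a)
    have haw : ∀ σ ∈ a ∆ w, σ.card = D ∧ σ ⊆ S (Fin.last n) := by
      intro σ hσ
      rcases Finset.mem_symmDiff.mp hσ with ⟨h1, _⟩ | ⟨h1, _⟩
      · rw [ha, Finset.mem_filter] at h1
        exact ⟨(hc σ h1.1).1, h1.2⟩
      · obtain ⟨h2, v, h3⟩ := hw σ h1
        exact ⟨by omega, h3.trans Finset.inter_subset_right⟩
    have hawcyc : bdry (a ∆ w) = ∅ := by
      rw [bdry_symmDiff, hwz, symmDiff_self, Finset.bot_eq_empty]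
    obtain ⟨u, hu, huw⟩ := simplex_fill (S (Fin.last n)) D hD1 (a ∆ w) haw hawcyc
    have hcw : ∀ σ ∈ c' ∆ w, σ.card = D ∧ ∃ v : Fin n, σ ⊆ S v.castSucc := by
      intro σ hσ
      rcases Finset.mem_symmDiff.mp hσ with ⟨h1, _⟩ | ⟨h1, _⟩
      · rw [hc'def, Finset.mem_filter] at h1
        obtain ⟨v, hv⟩ := (hc σ h1.1).2
        have hvlast : v ≠ Fin.last n := fun h => h1.2 (h ▸ hv)
        obtain ⟨v', hv'⟩ := Fin.exists_castSucc_eq.mpr hvlast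
        exact ⟨(hc σ h1.1).1, v', hv' ▸ hv⟩
      · obtain ⟨h2, v, h3⟩ := hw σ h1
        exact ⟨by omega, v, h3.trans Finset.inter_subset_left⟩
    have hcwcyc : bdry (c' ∆ w) = ∅ := by
      rw [bdry_symmDiff, hwz, ← hzz, symmDiff_self, Finset.bot_eq_empty]
    obtain ⟨u', hu', huw'⟩ := IH (fun v => S v.castSucc) D (by omega) (c' ∆ w) hcw hcwcyc
    refine ⟨u ∆ u', ?_, ?_⟩
    · intro ρ hρ
      rcases Finset.mem_symmDiff.mp hρ with ⟨h1, _⟩ | ⟨h1, _⟩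
      · exact ⟨(hu ρ h1).1, Fin.last n, (hu ρ h1).2⟩
      · obtain ⟨h2, v, h3⟩ := hu' ρ h1
        exact ⟨h2, v.castSucc, h3⟩
    · rw [bdry_symmDiff, huw, huw']
      rw [symmDiff_comm c' w, symmDiff_assoc, ← symmDiff_assoc w w c', symmDiff_self,
        bot_symmDiff, hsplit]

/-- Upper bound. -/
lemma no_gamma (n d : ℕ) (h : n ≤ d + 1) : ¬ GammaGe (⊤ : SimpleGraph (Fin n)) d := by
  rintro ⟨m, F, _, c, hchain, hcyc, hnb⟩
  set S : Fin n → Finset (Fin m) := fun v => Finset.univ.filter (fun i => v ∈ F i) with hS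
  have hc : ∀ σ ∈ c, σ.card = d + 1 ∧ ∃ v, σ ⊆ S v := by
    intro σ hσ
    obtain ⟨hK, hcard⟩ := hchain σ hσ
    refine ⟨hcard, ?_⟩
    simp only [nerveF, Finset.mem_filter] at hK
    obtain ⟨v, hv⟩ := hK.2.2
    refine ⟨v, fun i hi => ?_⟩
    simp only [hS, Finset.mem_filter, Finset.mem_univ, true_and]
    exact Finset.mem_of_subset (Finset.le_iff_subset.mp (Finset.inf_le hi)) hv
  obtain ⟨b, hb, hbc⟩ := vanish n S (d + 1) h c hc hcyc
  refine hnb b ?_ hbc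
  intro ρ hρ
  obtain ⟨hcard, v, hv⟩ := hb ρ hρ
  refine ⟨?_, hcard⟩
  simp only [nerveF, Finset.mem_filter, Finset.mem_univ, true_and]
  refine ⟨Finset.card_pos.mp (by omega), v, ?_⟩
  have : ({v} : Finset (Fin n)) ≤ ρ.inf F := by
    apply Finset.le_inf
    intro i hi
    have := hv hi
    simp only [hS, Finset.mem_filter] at this
    simpa using this.2
  simpa using this (Finset.mem_singleton_self v)

lemma induce_top_conn {V : Type} (s : Set V) (hs : s.Nonempty) :
    ((⊤ : SimpleGraph V).induce s).Connected := by
  have h1 : (⊤ : SimpleGraph V).induce s = ⊤ := by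
    ext a b
    simp [Subtype.val_injective.ne_iff]
  rw [h1]
  have : Nonempty s := hs.to_subtype
  exact SimpleGraph.connected_top

/-- Lower bound. -/
lemma gamma_low (n : ℕ) (h2 : 2 ≤ n) : GammaGe (⊤ : SimpleGraph (Fin n)) (n - 2) := by
  set F : Fin n → Finset (Fin n) := fun i => Finset.univ.erase i with hF
  refine ⟨n, F, ⟨?_, ?_⟩, ?_⟩
  · intro i
    apply Finset.card_pos.mp
    rw [hF]
    simp only [Finset.card_erase_of_mem (Finset.mem_univ i), Finset.card_univ, Fintype.card_fin]
    omega
  · intro σ _ hne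
    exact induce_top_conn _ (by exact_mod_cast hne)
  · refine ⟨Finset.univ.filter (fun σ : Finset (Fin n) => σ.card = n - 1), ?_, ?_, ?_⟩
    · intro σ hσ
      simp only [Finset.mem_filter, Finset.mem_univ, true_and] at hσ
      have hσne : σ.Nonempty := Finset.card_pos.mp (by omega)
      have hcompl : σᶜ.Nonempty := by
        apply Finset.card_pos.mp
        rw [Finset.card_compl, Fintype.card_fin]
        omega
      obtain ⟨i, hi⟩ := hcompl
      rw [Finset.mem_compl] at hi
      refine ⟨?_, by omega⟩
      simp only [nerveF, Finset.mem_filter, Finset.mem_univ, true_and]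
      refine ⟨hσne, i, ?_⟩
      have : ({i} : Finset (Fin n)) ≤ σ.inf F := by
        apply Finset.le_inf
        intro j hj
        simp only [hF, Finset.mem_singleton]
        intro x hx
        rw [Finset.mem_singleton] at hx
        refine Finset.mem_erase.mpr ⟨?_, Finset.mem_univ x⟩
        rw [hx]
        exact (ne_of_mem_of_not_mem hj hi).symm
      simpa using this (Finset.mem_singleton_self i)
    · -- boundary of the fundamental cycle is empty
      apply Finset.eq_empty_of_forall_notMem
      intro τ hτ
      rw [mem_bdry] at hτ
      set c := Finset.univ.filter (fun σ : Finset (Fin n) => σ.card = n - 1) with hc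
      by_cases hτc : τ.card = n - 2
      · have himg : c.filter (fun σ => τ ⊆ σ ∧ τ.card + 1 = σ.card)
            = τᶜ.image (fun y => insert y τ) := by
          ext σ
          simp only [hc, Finset.mem_filter, Finset.mem_univ, true_and, Finset.mem_image,
            Finset.mem_compl]
          constructor
          · rintro ⟨h1, h2, h3⟩
            have hlt : τ.card < σ.card := by omega
            obtain ⟨y, hy⟩ := Finset.exists_of_ssubset (Finset.ssubset_iff_subset_ne.mpr
              ⟨h2, fun h => by rw [h] at hlt; omega⟩)
            refine ⟨y, hy.2, ?_⟩
            apply Finset.eq_of_subset_of_card_le (Finset.insert_subset hy.1 h2)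
            rw [Finset.card_insert_of_notMem hy.2]; omega
          · rintro ⟨y, hy, rfl⟩
            have hcard : (insert y τ).card = τ.card + 1 := Finset.card_insert_of_notMem hy
            exact ⟨by omega, Finset.subset_insert y τ, by omega⟩
        rw [himg, Finset.card_image_of_injOn] at hτ
        · rw [Finset.card_compl, Fintype.card_fin, hτc] at hτ
          have : n - (n - 2) = 2 := by omega
          rw [this] at hτ
          rw [Nat.odd_iff] at hτ
          omega
        · intro y₁ h₁ y₂ h₂ he
          simp only [Finset.coe_compl, Set.mem_compl_iff, Finset.mem_coe] at h₁ h₂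
          simp only [] at he
          have : y₁ ∈ insert y₂ τ := by rw [← he]; exact Finset.mem_insert_self y₁ τ
          rcases Finset.mem_insert.mp this with h | h
          · exact h
          · exact absurd h h₁
      · have : c.filter (fun σ => τ ⊆ σ ∧ τ.card + 1 = σ.card) = ∅ := by
          apply Finset.eq_empty_of_forall_notMem
          intro σ hσ
          simp only [hc, Finset.mem_filter, Finset.mem_univ, true_and] at hσ
          exact hτc (by omega)
        rw [this] at hτ
        simp at hτ
    · -- not a boundary
      intro b hchain hb
      have hbempty : b = ∅ := by
        apply Finset.eq_empty_of_forall_notMem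
        intro σ hσ
        obtain ⟨hK, hcard⟩ := hchain σ hσ
        have hσuniv : σ = Finset.univ := by
          apply Finset.eq_univ_of_card
          rw [Fintype.card_fin]
          omega
        simp only [nerveF, Finset.mem_filter, Finset.mem_univ, true_and] at hK
        obtain ⟨i, hi⟩ := hK.2
        have : i ∈ F i := by
          have hle : Finset.univ.inf F ≤ F i := Finset.inf_le (Finset.mem_univ i)
          rw [hσuniv] at hi
          exact hle hi
        simp [hF] at this
      rw [hbempty, bdry_empty] at hb
      -- c is nonempty
      have hne : (Finset.univ.filter (fun σ : Finset (Fin n) => σ.card = n - 1)).Nonempty := by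
        refine ⟨Finset.univ.erase ⟨0, by omega⟩, ?_⟩
        simp only [Finset.mem_filter, Finset.mem_univ, true_and]
        rw [Finset.card_erase_of_mem (Finset.mem_univ _), Finset.card_univ, Fintype.card_fin]
      rw [← hb] at hne
      exact Finset.not_nonempty_empty hne


/-- the homological dimension of the complete graph `K_n` equals `n - 2`
for every `n ≥ 1`. -/
theorem stmt6 (n : ℕ) (hn : 1 ≤ n) :
    HomDimEq (⊤ : SimpleGraph (Fin n)) ((n : ℤ) - 2) := by
  constructor
  · intro d hd
    exact no_gamma n d (by omega)
  · intro d hd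
    have h2 : 2 ≤ n := by omega
    have hdn : d = n - 2 := by omega
    subst hdn
    exact gamma_low n h2
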